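/- A dyadic shift of complexity (m,n) is bounded on L²(μ) with operator norm at most 1. That is, if Sf(x) = Σ_{L ∈ 𝒟} ∫_L a_L(x,y) f(y) dμ(y) where a_L(x,y) = Σ c_{L,Q,R} h_Q(x) h_R(y) over subcubes Q, R of L with g(Q) = g(L)+m, g(R) = g(L)+n, with Σ_{Q,R} |c_{L,Q,R}|² ≤ 1 for each L, then ‖S‖_{L²(μ)→L²(μ)} ≤ 1. -/

import Mathlib

open Finset in
private lemma norm_sq_sum_orth {H ι κ : Type*} [NormedAddCommGroup H]
    [InnerProductSpace ℝ H] [DecidableEq κ] [DecidableEq ι] {h : ι → H} (horth : Orthonormal ℝ h)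
    (s : Finset κ) (q : κ → ι) (hinj : Set.InjOn q s) (β : κ → ℝ) :
    ‖∑ k ∈ s, β k • h (q k)‖ ^ 2 = ∑ k ∈ s, β k ^ 2 := by
  rw [← real_inner_self_eq_norm_sq, inner_sum]
  refine Finset.sum_congr rfl fun i hi => ?_
  rw [sum_inner]
  rw [Finset.sum_eq_single i]
  · rw [real_inner_smul_left, real_inner_smul_right, orthonormal_iff_ite.mp horth,
      if_pos rfl]
    ring
  · intro j hj hne
    rw [real_inner_smul_left, real_inner_smul_right, orthonormal_iff_ite.mp horth,
      if_neg (fun hq => hne (hinj hj hi hq)), mul_zero, mul_zero]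
  · intro hi'; exact absurd hi hi'

/-- a dyadic shift of complexity (m,n) is bounded on L²(μ) with norm at
most 1.  Abstract Hilbert-space formulation: `h` is the orthonormal family of μ-Haar
functions, for each cube `L` of the (finite part of the) lattice `𝔏` the Finsets `QS L`
and `RS L` index the subcubes of `L` of generations `g(L)+m` and `g(L)+n` (so these index
sets are pairwise disjoint for different `L`), and the coefficients satisfy
`Σ_{Q,R} c_{L,Q,R}² ≤ 1` for each `L`.  Then `‖S f‖ ≤ ‖f‖` where
`S f = Σ_L Σ_{Q,R} c_{L,Q,R} ⟨f, h_R⟩ h_Q`. -/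
theorem dyadic_shift_norm_le_one {H : Type*} [NormedAddCommGroup H]
    [InnerProductSpace ℝ H] {ι : Type*} [DecidableEq ι]
    (h : ι → H) (horth : Orthonormal ℝ h)
    (𝔏 : Finset ι) (QS RS : ι → Finset ι)
    (hQdisj : ∀ L ∈ 𝔏, ∀ L' ∈ 𝔏, L ≠ L' → Disjoint (QS L) (QS L'))
    (hRdisj : ∀ L ∈ 𝔏, ∀ L' ∈ 𝔏, L ≠ L' → Disjoint (RS L) (RS L'))
    (c : ι → ι → ι → ℝ)
    (hc : ∀ L ∈ 𝔏, ∑ Q ∈ QS L, ∑ R ∈ RS L, (c L Q R) ^ 2 ≤ 1)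
    (f : H) :
    ‖∑ L ∈ 𝔏, ∑ Q ∈ QS L, ∑ R ∈ RS L,
        (c L Q R * (inner ℝ (h R) f : ℝ)) • h Q‖ ≤ ‖f‖ := by
  rw [← pow_le_pow_iff_left₀ (norm_nonneg _) (norm_nonneg f) two_ne_zero]
  have hrw : (∑ L ∈ 𝔏, ∑ Q ∈ QS L, ∑ R ∈ RS L,
      (c L Q R * (inner ℝ (h R) f : ℝ)) • h Q)
      = ∑ p ∈ 𝔏.sigma QS, (∑ R ∈ RS p.1, c p.1 p.2 R * (inner ℝ (h R) f : ℝ)) • h p.2 := by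
    rw [Finset.sum_sigma]
    exact Finset.sum_congr rfl fun L _ => Finset.sum_congr rfl fun Q _ => by
      rw [Finset.sum_smul]
  have hinjQ : Set.InjOn (fun p : (_ : ι) × ι => p.2) (𝔏.sigma QS) := by
    rintro ⟨a, b⟩ hp ⟨a', b'⟩ hp' heq
    simp only [Finset.coe_sigma, Set.mem_sigma_iff, Finset.mem_coe] at hp hp'
    have hb : b = b' := heq
    subst hb
    have ha : a = a' := by
      by_contra hne
      exact Finset.disjoint_left.mp (hQdisj _ hp.1 _ hp'.1 hne) hp.2 hp'.2
    subst ha; rfl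
  rw [hrw, norm_sq_sum_orth horth _ _ hinjQ]
  have step1 : ∑ p ∈ 𝔏.sigma QS,
      (∑ R ∈ RS p.1, c p.1 p.2 R * (inner ℝ (h R) f : ℝ)) ^ 2
      ≤ ∑ p ∈ 𝔏.sigma RS, (inner ℝ (h p.2) f : ℝ) ^ 2 := by
    rw [Finset.sum_sigma, Finset.sum_sigma]
    refine Finset.sum_le_sum fun L hL => ?_
    calc ∑ Q ∈ QS L, (∑ R ∈ RS L, c L Q R * (inner ℝ (h R) f : ℝ)) ^ 2
        ≤ ∑ Q ∈ QS L, (∑ R ∈ RS L, c L Q R ^ 2) * ∑ R ∈ RS L, (inner ℝ (h R) f : ℝ) ^ 2 :=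
          Finset.sum_le_sum fun Q _ => Finset.sum_mul_sq_le_sq_mul_sq _ _ _
      _ = (∑ Q ∈ QS L, ∑ R ∈ RS L, c L Q R ^ 2) * ∑ R ∈ RS L, (inner ℝ (h R) f : ℝ) ^ 2 := by
          rw [Finset.sum_mul]
      _ ≤ 1 * ∑ R ∈ RS L, (inner ℝ (h R) f : ℝ) ^ 2 := by
          apply mul_le_mul_of_nonneg_right (hc L hL)
          exact Finset.sum_nonneg fun R _ => sq_nonneg _
      _ = ∑ R ∈ RS L, (inner ℝ (h R) f : ℝ) ^ 2 := one_mul _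
  refine step1.trans ?_
  have hinjR : Set.InjOn (fun p : (_ : ι) × ι => p.2) (𝔏.sigma RS) := by
    rintro ⟨a, b⟩ hp ⟨a', b'⟩ hp' heq
    simp only [Finset.coe_sigma, Set.mem_sigma_iff, Finset.mem_coe] at hp hp'
    have hb : b = b' := heq
    subst hb
    have ha : a = a' := by
      by_contra hne
      exact Finset.disjoint_left.mp (hRdisj _ hp.1 _ hp'.1 hne) hp.2 hp'.2
    subst ha; rfl
  calc ∑ p ∈ 𝔏.sigma RS, (inner ℝ (h p.2) f : ℝ) ^ 2
      = ∑ i ∈ (𝔏.sigma RS).image (fun p => p.2), (inner ℝ (h i) f : ℝ) ^ 2 :=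
        (Finset.sum_image (f := fun i => (inner ℝ (h i) f : ℝ) ^ 2) (fun p hp p' hp' => hinjR hp hp')).symm
    _ = ∑ i ∈ (𝔏.sigma RS).image (fun p => p.2), ‖(inner ℝ (h i) f : ℝ)‖ ^ 2
        := by simp [sq_abs]
    _ ≤ ‖f‖ ^ 2 := horth.sum_inner_products_le f
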